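/- Let f : ℝ^{m₁×m₂} → ℝ be convex and differentiable, λ > 0, and let X, X̃ ∈ ℝ^{m₁×m₂} satisfy f(X) + λ‖X‖_{σ,1} ≤ f(X̃) + λ‖X̃‖_{σ,1} and λ ≥ 2‖∇f(X̃)‖_{σ,∞}. Then ‖X − X̃‖_{σ,1} ≤ 4√(2·rank(X̃)) · ‖X − X̃‖_{σ,2}. (In the paper f = L_Y, the empirical negative log-likelihood, and X̃ = X̄.) -/

import Mathlib

open MeasureTheory ProbabilityTheory Matrix

/-- Singular values of a rectangular real matrix: square roots of the
eigenvalues of `Xᵀ * X`. -/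
noncomputable def singVals {m₁ m₂ : ℕ} (X : Matrix (Fin m₁) (Fin m₂) ℝ) : Fin m₂ → ℝ :=
  fun i => Real.sqrt ((by simpa using Matrix.isHermitian_conjTranspose_mul_self X : (Xᵀ * X).IsHermitian).eigenvalues i)

/-- Nuclear (Schatten-1) norm `‖·‖_{σ,1}`. -/
noncomputable def nucNorm {m₁ m₂ : ℕ} (X : Matrix (Fin m₁) (Fin m₂) ℝ) : ℝ :=
  ∑ i, singVals X i

/-- Operator (Schatten-∞) norm `‖·‖_{σ,∞}`: the largest singular value. -/
noncomputable def opNorm {m₁ m₂ : ℕ} (X : Matrix (Fin m₁) (Fin m₂) ℝ) : ℝ :=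
  ⨆ i, singVals X i

/-- Frobenius (Schatten-2) norm `‖·‖_{σ,2}`. -/
noncomputable def frobNorm {m₁ m₂ : ℕ} (X : Matrix (Fin m₁) (Fin m₂) ℝ) : ℝ :=
  Real.sqrt (∑ k, ∑ l, (X k l) ^ 2)

/-- Entrywise sup norm `‖·‖_∞`. -/
noncomputable def linfNorm {m₁ m₂ : ℕ} (X : Matrix (Fin m₁) (Fin m₂) ℝ) : ℝ :=
  ⨆ p : Fin m₁ × Fin m₂, |X p.1 p.2|

/-- The matrix of the orthogonal projection onto a subspace `S` of `ℝ^k`. -/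
noncomputable def projM {k : ℕ} (S : Submodule ℝ (EuclideanSpace ℝ (Fin k))) :
    Matrix (Fin k) (Fin k) ℝ :=
  LinearMap.toMatrix (EuclideanSpace.basisFun (Fin k) ℝ).toBasis
    (EuclideanSpace.basisFun (Fin k) ℝ).toBasis
    (S.subtype ∘ₗ (S.orthogonalProjectionOnto).toLinearMap)

/-- The span `S₁(X)` of the left singular vectors of `X`, i.e. its column space
(`S₂(X)`, the span of the right singular vectors, is `colSpace Xᵀ`). -/
noncomputable def colSpace {m₁ m₂ : ℕ} (X : Matrix (Fin m₁) (Fin m₂) ℝ) :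
    Submodule ℝ (EuclideanSpace ℝ (Fin m₁)) :=
  LinearMap.range (Matrix.toEuclideanLin X)

/-- The projection `P⊥_X(T) = P_{S₁(X)⊥} T P_{S₂(X)⊥}`. -/
noncomputable def Pperp {m₁ m₂ : ℕ} (X T : Matrix (Fin m₁) (Fin m₂) ℝ) :
    Matrix (Fin m₁) (Fin m₂) ℝ :=
  projM (Submodule.orthogonal (colSpace X)) * T * projM (Submodule.orthogonal (colSpace Xᵀ))

/-- The projection `P_X(T) = T - P⊥_X(T)`. -/
noncomputable def Ppar {m₁ m₂ : ℕ} (X T : Matrix (Fin m₁) (Fin m₂) ℝ) :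
    Matrix (Fin m₁) (Fin m₂) ℝ :=
  T - Pperp X T

attribute [local instance] Matrix.normedAddCommGroup Matrix.normedSpace

namespace NucAux

variable {m₁ m₂ : ℕ}

noncomputable def eigA (A : Matrix (Fin m₁) (Fin m₂) ℝ) : Fin m₂ → ℝ :=
  (by simpa using Matrix.isHermitian_conjTranspose_mul_self A : (Aᵀ * A).IsHermitian).eigenvalues

noncomputable def rsv (A : Matrix (Fin m₁) (Fin m₂) ℝ) : Fin m₂ → Fin m₂ → ℝ :=
  fun i => WithLp.ofLp ((by simpa using Matrix.isHermitian_conjTranspose_mul_self A : (Aᵀ * A).IsHermitian).eigenvectorBasis i)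

noncomputable def lsv (A : Matrix (Fin m₁) (Fin m₂) ℝ) : Fin m₂ → Fin m₁ → ℝ :=
  fun i => (singVals A i)⁻¹ • (A *ᵥ rsv A i)

lemma eigA_nonneg (A : Matrix (Fin m₁) (Fin m₂) ℝ) (i : Fin m₂) : 0 ≤ eigA A i :=
  Matrix.eigenvalues_conjTranspose_mul_self_nonneg A i

lemma singVals_nonneg (A : Matrix (Fin m₁) (Fin m₂) ℝ) (i : Fin m₂) : 0 ≤ singVals A i :=
  Real.sqrt_nonneg _

lemma singVals_sq (A : Matrix (Fin m₁) (Fin m₂) ℝ) (i : Fin m₂) :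
    singVals A i ^ 2 = eigA A i :=
  Real.sq_sqrt (eigA_nonneg A i)

lemma singVals_eq_zero_iff (A : Matrix (Fin m₁) (Fin m₂) ℝ) (i : Fin m₂) :
    singVals A i = 0 ↔ eigA A i = 0 := by
  constructor
  · intro h
    have := singVals_sq A i
    rw [h] at this; simpa using this.symm
  · intro h
    simp [singVals, eigA] at h ⊢
    rw [h]; exact Real.sqrt_zero

lemma mulVec_rsv (A : Matrix (Fin m₁) (Fin m₂) ℝ) (i : Fin m₂) :
    (Aᵀ * A) *ᵥ rsv A i = eigA A i • rsv A i :=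
  (by simpa using Matrix.isHermitian_conjTranspose_mul_self A : (Aᵀ * A).IsHermitian).mulVec_eigenvectorBasis i

lemma rsv_orthonormal (A : Matrix (Fin m₁) (Fin m₂) ℝ) (i j : Fin m₂) :
    rsv A i ⬝ᵥ rsv A j = if i = j then 1 else 0 := by
  have h := (by simpa using Matrix.isHermitian_conjTranspose_mul_self A : (Aᵀ * A).IsHermitian).eigenvectorBasis.orthonormal
  rcases eq_or_ne i j with rfl | hij
  · have := h.1 i
    rw [EuclideanSpace.norm_eq] at this
    have h2 : ∑ k, rsv A i k ^ 2 = 1 := by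
      have := congrArg (· ^ 2) this
      simpa [rsv, Real.sq_sqrt (Finset.sum_nonneg fun k _ => sq_nonneg _), sq_abs] using this
    simpa [dotProduct, pow_two] using h2
  · have := h.2 hij
    simp only [PiLp.inner_apply, RCLike.inner_apply, starRingEnd_apply, star_trivial] at this
    simpa [rsv, dotProduct, hij, mul_comm] using this


lemma rsv_complete (A : Matrix (Fin m₁) (Fin m₂) ℝ) (k l : Fin m₂) :
    ∑ i, rsv A i k * rsv A i l = if k = l then 1 else 0 := by
  classical
  set V : Matrix (Fin m₂) (Fin m₂) ℝ := Matrix.of (fun i k => rsv A i k) with hV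
  have h1 : V * Vᵀ = 1 := by
    ext i j
    simp only [Matrix.mul_apply, Matrix.transpose_apply, Matrix.one_apply, hV, Matrix.of_apply]
    simpa [dotProduct] using rsv_orthonormal A i j
  have h2 : Vᵀ * V = 1 := mul_eq_one_comm.mp h1
  have := congrFun (congrFun h2 k) l
  simp only [Matrix.mul_apply, Matrix.transpose_apply, Matrix.one_apply, hV, Matrix.of_apply] at this
  simpa using this

-- ⟨A vᵢ, A vⱼ⟩ = δᵢⱼ λᵢ
lemma dot_mulVec_rsv (A : Matrix (Fin m₁) (Fin m₂) ℝ) (i j : Fin m₂) :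
    (A *ᵥ rsv A i) ⬝ᵥ (A *ᵥ rsv A j) = if i = j then eigA A i else 0 := by
  have : (A *ᵥ rsv A i) ⬝ᵥ (A *ᵥ rsv A j) = rsv A i ⬝ᵥ ((Aᵀ * A) *ᵥ rsv A j) := by
    rw [← Matrix.mulVec_mulVec]
    conv_rhs => rw [Matrix.dotProduct_mulVec, Matrix.vecMul_transpose]
  rw [this, mulVec_rsv, dotProduct_smul, rsv_orthonormal]
  rcases eq_or_ne i j with rfl | hij
  · simp
  · simp [hij]

lemma mulVec_rsv_eq_zero (A : Matrix (Fin m₁) (Fin m₂) ℝ) (i : Fin m₂)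
    (h : singVals A i = 0) : A *ᵥ rsv A i = 0 := by
  have h0 : (A *ᵥ rsv A i) ⬝ᵥ (A *ᵥ rsv A i) = 0 := by
    rw [dot_mulVec_rsv]; simp [(singVals_eq_zero_iff A i).mp h]
  exact dotProduct_self_eq_zero.mp h0

lemma mulVec_rsv_eq_smul_lsv (A : Matrix (Fin m₁) (Fin m₂) ℝ) (i : Fin m₂) :
    A *ᵥ rsv A i = singVals A i • lsv A i := by
  rcases eq_or_ne (singVals A i) 0 with h | h
  · rw [h, zero_smul, mulVec_rsv_eq_zero A i h]
  · rw [lsv, smul_smul, mul_inv_cancel₀ h, one_smul]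

lemma lsv_eq_zero (A : Matrix (Fin m₁) (Fin m₂) ℝ) (i : Fin m₂) (h : singVals A i = 0) :
    lsv A i = 0 := by
  rw [lsv]; rw [mulVec_rsv_eq_zero A i h]; simp

lemma lsv_dot (A : Matrix (Fin m₁) (Fin m₂) ℝ) (i j : Fin m₂) :
    lsv A i ⬝ᵥ lsv A j =
      if i = j ∧ singVals A i ≠ 0 then 1 else 0 := by
  rcases eq_or_ne (singVals A i) 0 with h | h
  · rw [lsv_eq_zero A i h]; simp [h]
  rcases eq_or_ne (singVals A j) 0 with h' | h'
  · rw [lsv_eq_zero A j h']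
    have : ¬ (i = j ∧ singVals A i ≠ 0) := by rintro ⟨rfl, h2⟩; exact h2 h'
    simp [this]
  simp only [lsv, smul_dotProduct, dotProduct_smul, dot_mulVec_rsv]
  rcases eq_or_ne i j with rfl | hij
  · rw [if_pos rfl, if_pos ⟨rfl, h⟩]
    have h2 := singVals_sq A i
    have : (singVals A i)⁻¹ * ((singVals A i)⁻¹ * eigA A i) = 1 := by
      rw [← h2]; field_simp
    simpa using this
  · simp [hij]

lemma lsv_norm_le (A : Matrix (Fin m₁) (Fin m₂) ℝ) (i : Fin m₂) :
    lsv A i ⬝ᵥ lsv A i ≤ 1 := by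
  rw [lsv_dot]; split <;> norm_num

-- SVD decomposition
lemma svd_decomp (A : Matrix (Fin m₁) (Fin m₂) ℝ) (k : Fin m₁) (l : Fin m₂) :
    A k l = ∑ i, singVals A i * (lsv A i k * rsv A i l) := by
  have : ∀ i, singVals A i * (lsv A i k * rsv A i l)
      = (A *ᵥ rsv A i) k * rsv A i l := by
    intro i
    rw [mulVec_rsv_eq_smul_lsv]; simp only [Pi.smul_apply, smul_eq_mul]; ring
  simp only [this]
  have : ∀ i, (A *ᵥ rsv A i) k * rsv A i l = ∑ l', A k l' * (rsv A i l' * rsv A i l) := by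
    intro i; simp [Matrix.mulVec, dotProduct, Finset.sum_mul, mul_assoc]
  simp only [this]
  rw [Finset.sum_comm]
  have : ∀ l', ∑ i, A k l' * (rsv A i l' * rsv A i l) = A k l' * if l' = l then 1 else 0 := by
    intro l'
    rw [← Finset.mul_sum, rsv_complete]
  simp only [this]
  simp [Finset.sum_ite_eq']

lemma dot_self_nonneg {n : ℕ} (x : Fin n → ℝ) : (0:ℝ) ≤ x ⬝ᵥ x :=
  Finset.sum_nonneg fun k _ => mul_self_nonneg _

lemma sum_dot {n : ℕ} {ι : Type*} [Fintype ι] (g : ι → Fin n → ℝ) (x : Fin n → ℝ) :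
    (∑ i, g i) ⬝ᵥ x = ∑ i, g i ⬝ᵥ x := by
  simp only [dotProduct, Finset.sum_apply, Finset.sum_mul]
  exact Finset.sum_comm

lemma dot_sum {n : ℕ} {ι : Type*} [Fintype ι] (g : ι → Fin n → ℝ) (x : Fin n → ℝ) :
    x ⬝ᵥ (∑ i, g i) = ∑ i, x ⬝ᵥ g i := by
  rw [dotProduct_comm, sum_dot]
  exact Finset.sum_congr rfl fun i _ => dotProduct_comm _ _

lemma bessel {n : ℕ} {ι : Type*} [Fintype ι] (w : ι → Fin n → ℝ)
    (horth : ∀ i j, i ≠ j → w i ⬝ᵥ w j = 0) (hle : ∀ i, w i ⬝ᵥ w i ≤ 1) (x : Fin n → ℝ) :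
    ∑ i, (w i ⬝ᵥ x) ^ 2 ≤ x ⬝ᵥ x := by
  classical
  set c : ι → ℝ := fun i => w i ⬝ᵥ x with hc
  set y : Fin n → ℝ := x - ∑ i, c i • w i with hy
  have hy0 : (0:ℝ) ≤ y ⬝ᵥ y := dot_self_nonneg y
  have hs_x : (∑ i, c i • w i) ⬝ᵥ x = ∑ i, c i ^ 2 := by
    rw [sum_dot]
    exact Finset.sum_congr rfl fun i _ => by
      rw [smul_dotProduct]; simp [hc, pow_two, smul_eq_mul]
  have hx_s : x ⬝ᵥ (∑ i, c i • w i) = ∑ i, c i ^ 2 := by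
    rw [dotProduct_comm]; exact hs_x
  have hs_s : (∑ i, c i • w i) ⬝ᵥ (∑ i, c i • w i) = ∑ i, c i ^ 2 * (w i ⬝ᵥ w i) := by
    rw [sum_dot]
    refine Finset.sum_congr rfl fun i _ => ?_
    rw [smul_dotProduct, dot_sum]
    have : ∀ j, w i ⬝ᵥ c j • w j = c j * (w i ⬝ᵥ w j) := fun j => by
      rw [dotProduct_smul]; simp
    simp only [this]
    rw [Finset.sum_eq_single i (fun j _ hj => by rw [horth i j (Ne.symm hj), mul_zero])
      (fun h => absurd (Finset.mem_univ i) h)]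
    simp [pow_two]; ring
  have hyy : y ⬝ᵥ y = x ⬝ᵥ x - 2 * ∑ i, c i ^ 2 + ∑ i, c i ^ 2 * (w i ⬝ᵥ w i) := by
    rw [hy, sub_dotProduct, dotProduct_sub, dotProduct_sub, hs_x, hx_s, hs_s]
    ring
  have hbound : ∑ i, c i ^ 2 * (w i ⬝ᵥ w i) ≤ ∑ i, c i ^ 2 :=
    Finset.sum_le_sum fun i _ => by
      have := mul_le_mul_of_nonneg_left (hle i) (sq_nonneg (c i)); simpa using this
  have : 0 ≤ x ⬝ᵥ x - ∑ i, c i ^ 2 := by linarith [hy0, hyy.symm.le]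
  linarith

lemma dot_mulVec_expand (A : Matrix (Fin m₁) (Fin m₂) ℝ) (u : Fin m₁ → ℝ) (v : Fin m₂ → ℝ) :
    u ⬝ᵥ (A *ᵥ v) = ∑ j, singVals A j * ((u ⬝ᵥ lsv A j) * (rsv A j ⬝ᵥ v)) := by
  have step : ∀ j, singVals A j * ((u ⬝ᵥ lsv A j) * (rsv A j ⬝ᵥ v))
      = ∑ k, ∑ l, singVals A j * ((u k * lsv A j k) * (rsv A j l * v l)) := by
    intro j
    rw [show (u ⬝ᵥ lsv A j) * (rsv A j ⬝ᵥ v)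
        = ∑ k, ∑ l, (u k * lsv A j k) * (rsv A j l * v l) from Finset.sum_mul_sum _ _ _ _,
      Finset.mul_sum]
    exact Finset.sum_congr rfl fun k _ => by
      rw [Finset.mul_sum]
  simp only [step]
  rw [Finset.sum_comm]
  have : ∀ k, ∑ j, ∑ l, singVals A j * ((u k * lsv A j k) * (rsv A j l * v l))
      = u k * (A *ᵥ v) k := by
    intro k
    rw [Finset.sum_comm]
    have : ∀ l, ∑ j, singVals A j * ((u k * lsv A j k) * (rsv A j l * v l))
        = u k * (A k l * v l) := by
      intro l
      rw [svd_decomp A k l, Finset.sum_mul, Finset.mul_sum]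
      exact Finset.sum_congr rfl fun j _ => by ring
    simp only [this]
    simp [Matrix.mulVec, dotProduct, Finset.mul_sum, mul_assoc]
  simp only [this]
  rfl

/-- master duality lemma -/
lemma sum_dot_le_nucNorm {ι : Type*} [Fintype ι] (A : Matrix (Fin m₁) (Fin m₂) ℝ)
    (u : ι → Fin m₁ → ℝ) (v : ι → Fin m₂ → ℝ)
    (hu : ∀ i j, i ≠ j → u i ⬝ᵥ u j = 0) (hu1 : ∀ i, u i ⬝ᵥ u i ≤ 1)
    (hv : ∀ i j, i ≠ j → v i ⬝ᵥ v j = 0) (hv1 : ∀ i, v i ⬝ᵥ v i ≤ 1) :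
    ∑ i, u i ⬝ᵥ (A *ᵥ v i) ≤ nucNorm A := by
  classical
  simp only [dot_mulVec_expand A]
  rw [Finset.sum_comm]
  have key : ∀ j, ∑ i, singVals A j * ((u i ⬝ᵥ lsv A j) * (rsv A j ⬝ᵥ v i)) ≤ singVals A j := by
    intro j
    rw [← Finset.mul_sum]
    have hcs : ∑ i, (u i ⬝ᵥ lsv A j) * (rsv A j ⬝ᵥ v i) ≤ 1 := by
      have h1 : ∑ i, (u i ⬝ᵥ lsv A j) * (rsv A j ⬝ᵥ v i)
          ≤ Real.sqrt (∑ i, (u i ⬝ᵥ lsv A j) ^ 2) * Real.sqrt (∑ i, (rsv A j ⬝ᵥ v i) ^ 2) :=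
        Real.sum_mul_le_sqrt_mul_sqrt _ _ _
      have h2 : ∑ i, (u i ⬝ᵥ lsv A j) ^ 2 ≤ 1 := by
        have := bessel u hu hu1 (lsv A j)
        exact this.trans (lsv_norm_le A j)
      have h3 : ∑ i, (rsv A j ⬝ᵥ v i) ^ 2 ≤ 1 := by
        have hb := bessel v hv hv1 (rsv A j)
        have : ∑ i, (rsv A j ⬝ᵥ v i) ^ 2 = ∑ i, (v i ⬝ᵥ rsv A j) ^ 2 := by
          simp [dotProduct_comm]
        rw [this]
        refine hb.trans ?_
        rw [rsv_orthonormal]; simp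
      calc ∑ i, (u i ⬝ᵥ lsv A j) * (rsv A j ⬝ᵥ v i)
          ≤ Real.sqrt (∑ i, (u i ⬝ᵥ lsv A j) ^ 2) * Real.sqrt (∑ i, (rsv A j ⬝ᵥ v i) ^ 2) := h1
        _ ≤ 1 * 1 := by
            apply mul_le_mul
            · exact (Real.sqrt_le_one.mpr h2)
            · exact (Real.sqrt_le_one.mpr h3)
            · exact Real.sqrt_nonneg _
            · norm_num
        _ = 1 := by norm_num
    exact mul_le_of_le_one_right (singVals_nonneg A j) hcs
  exact Finset.sum_le_sum fun j _ => key j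

lemma nucNorm_attained (A : Matrix (Fin m₁) (Fin m₂) ℝ) :
    nucNorm A = ∑ i, lsv A i ⬝ᵥ (A *ᵥ rsv A i) := by
  refine Finset.sum_congr rfl fun i _ => ?_
  rw [mulVec_rsv_eq_smul_lsv, dotProduct_smul, smul_eq_mul, lsv_dot]
  rcases eq_or_ne (singVals A i) 0 with h | h
  · simp [h]
  · simp [h]

lemma nucNorm_nonneg (A : Matrix (Fin m₁) (Fin m₂) ℝ) : 0 ≤ nucNorm A :=
  Finset.sum_nonneg fun i _ => singVals_nonneg A i

lemma lsv_orth (A : Matrix (Fin m₁) (Fin m₂) ℝ) : ∀ i j, i ≠ j → lsv A i ⬝ᵥ lsv A j = 0 := by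
  intro i j hij; rw [lsv_dot]; simp [hij]

lemma rsv_orth (A : Matrix (Fin m₁) (Fin m₂) ℝ) : ∀ i j, i ≠ j → rsv A i ⬝ᵥ rsv A j = 0 := by
  intro i j hij; rw [rsv_orthonormal]; simp [hij]

lemma rsv_norm_le (A : Matrix (Fin m₁) (Fin m₂) ℝ) (i : Fin m₂) : rsv A i ⬝ᵥ rsv A i ≤ 1 := by
  rw [rsv_orthonormal]; simp

lemma nucNorm_add_le (A B : Matrix (Fin m₁) (Fin m₂) ℝ) :
    nucNorm (A + B) ≤ nucNorm A + nucNorm B := by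
  rw [nucNorm_attained (A + B)]
  have : ∀ i, lsv (A+B) i ⬝ᵥ ((A+B) *ᵥ rsv (A+B) i)
      = lsv (A+B) i ⬝ᵥ (A *ᵥ rsv (A+B) i) + lsv (A+B) i ⬝ᵥ (B *ᵥ rsv (A+B) i) := by
    intro i; rw [Matrix.add_mulVec, dotProduct_add]
  simp only [this]
  rw [Finset.sum_add_distrib]
  gcongr
  · exact sum_dot_le_nucNorm A _ _ (lsv_orth (A+B)) (lsv_norm_le (A+B))
      (rsv_orth (A+B)) (rsv_norm_le (A+B))
  · exact sum_dot_le_nucNorm B _ _ (lsv_orth (A+B)) (lsv_norm_le (A+B))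
      (rsv_orth (A+B)) (rsv_norm_le (A+B))

lemma singVals_le_opNorm (A : Matrix (Fin m₁) (Fin m₂) ℝ) (i : Fin m₂) :
    singVals A i ≤ opNorm A :=
  le_ciSup (Set.Finite.bddAbove (Set.finite_range _)) i

lemma opNorm_nonneg (A : Matrix (Fin m₁) (Fin m₂) ℝ) : 0 ≤ opNorm A := by
  rcases isEmpty_or_nonempty (Fin m₂) with h | h
  · rw [opNorm, Real.iSup_of_isEmpty]
  · exact (singVals_nonneg A (Classical.arbitrary _)).trans (singVals_le_opNorm A _)

lemma dot_mulVec_le_opNorm (G : Matrix (Fin m₁) (Fin m₂) ℝ) (u : Fin m₁ → ℝ) (v : Fin m₂ → ℝ)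
    (hu : u ⬝ᵥ u ≤ 1) (hv : v ⬝ᵥ v ≤ 1) : u ⬝ᵥ (G *ᵥ v) ≤ opNorm G := by
  rw [dot_mulVec_expand]
  have h1 : ∀ j, singVals G j * ((u ⬝ᵥ lsv G j) * (rsv G j ⬝ᵥ v))
      ≤ opNorm G * (|u ⬝ᵥ lsv G j| * |rsv G j ⬝ᵥ v|) := by
    intro j
    have : (u ⬝ᵥ lsv G j) * (rsv G j ⬝ᵥ v) ≤ |u ⬝ᵥ lsv G j| * |rsv G j ⬝ᵥ v| := by
      rw [← abs_mul]; exact le_abs_self _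
    calc singVals G j * ((u ⬝ᵥ lsv G j) * (rsv G j ⬝ᵥ v))
        ≤ singVals G j * (|u ⬝ᵥ lsv G j| * |rsv G j ⬝ᵥ v|) :=
          mul_le_mul_of_nonneg_left this (singVals_nonneg G j)
      _ ≤ opNorm G * (|u ⬝ᵥ lsv G j| * |rsv G j ⬝ᵥ v|) :=
          mul_le_mul_of_nonneg_right (singVals_le_opNorm G j)
            (mul_nonneg (abs_nonneg _) (abs_nonneg _))
  calc ∑ j, singVals G j * ((u ⬝ᵥ lsv G j) * (rsv G j ⬝ᵥ v))
      ≤ ∑ j, opNorm G * (|u ⬝ᵥ lsv G j| * |rsv G j ⬝ᵥ v|) := Finset.sum_le_sum fun j _ => h1 j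
    _ = opNorm G * ∑ j, |u ⬝ᵥ lsv G j| * |rsv G j ⬝ᵥ v| := by rw [Finset.mul_sum]
    _ ≤ opNorm G * 1 := by
        apply mul_le_mul_of_nonneg_left _ (opNorm_nonneg G)
        have h1 : ∑ j, |u ⬝ᵥ lsv G j| * |rsv G j ⬝ᵥ v|
            ≤ Real.sqrt (∑ j, |u ⬝ᵥ lsv G j| ^ 2) * Real.sqrt (∑ j, |rsv G j ⬝ᵥ v| ^ 2) :=
          Real.sum_mul_le_sqrt_mul_sqrt _ _ _
        have h2 : ∑ j, |u ⬝ᵥ lsv G j| ^ 2 ≤ 1 := by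
          simp only [sq_abs]
          have : ∑ j, (u ⬝ᵥ lsv G j) ^ 2 = ∑ j, (lsv G j ⬝ᵥ u) ^ 2 := by
            simp [dotProduct_comm]
          rw [this]
          exact (bessel (lsv G) (lsv_orth G) (lsv_norm_le G) u).trans hu
        have h3 : ∑ j, |rsv G j ⬝ᵥ v| ^ 2 ≤ 1 := by
          simp only [sq_abs]
          exact (bessel (rsv G) (rsv_orth G) (rsv_norm_le G) v).trans hv
        calc ∑ j, |u ⬝ᵥ lsv G j| * |rsv G j ⬝ᵥ v|
            ≤ Real.sqrt (∑ j, |u ⬝ᵥ lsv G j| ^ 2) * Real.sqrt (∑ j, |rsv G j ⬝ᵥ v| ^ 2) := h1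
          _ ≤ 1 * 1 := mul_le_mul (Real.sqrt_le_one.mpr h2) (Real.sqrt_le_one.mpr h3)
              (Real.sqrt_nonneg _) (by norm_num)
          _ = 1 := by norm_num
    _ = opNorm G := mul_one _

noncomputable def innF (A B : Matrix (Fin m₁) (Fin m₂) ℝ) : ℝ := ∑ k, ∑ l, A k l * B k l

lemma innF_le_opNorm_mul_nucNorm (G D : Matrix (Fin m₁) (Fin m₂) ℝ) :
    innF G D ≤ opNorm G * nucNorm D := by
  have expand : innF G D = ∑ j, singVals D j * (lsv D j ⬝ᵥ (G *ᵥ rsv D j)) := by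
    have rhs : ∀ j, singVals D j * (lsv D j ⬝ᵥ (G *ᵥ rsv D j))
        = ∑ k, ∑ l, G k l * (singVals D j * (lsv D j k * rsv D j l)) := by
      intro j
      have h0 : lsv D j ⬝ᵥ (G *ᵥ rsv D j) = ∑ k, ∑ l, lsv D j k * (G k l * rsv D j l) := by
        simp only [dotProduct, Matrix.mulVec, Finset.mul_sum]
      rw [h0, Finset.mul_sum]
      exact Finset.sum_congr rfl fun k _ => by
        rw [Finset.mul_sum]
        exact Finset.sum_congr rfl fun l _ => by ring
    simp only [rhs]
    rw [Finset.sum_comm]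
    refine Finset.sum_congr rfl fun k _ => ?_
    rw [Finset.sum_comm]
    refine Finset.sum_congr rfl fun l _ => ?_
    rw [← Finset.mul_sum, ← svd_decomp D k l]
  rw [expand, nucNorm, Finset.mul_sum]
  refine Finset.sum_le_sum fun j _ => ?_
  rw [mul_comm (opNorm G) (singVals D j)]
  exact mul_le_mul_of_nonneg_left
    (dot_mulVec_le_opNorm G _ _ (lsv_norm_le D j) (rsv_norm_le D j)) (singVals_nonneg D j)


lemma sum_eigA (A : Matrix (Fin m₁) (Fin m₂) ℝ) :
    ∑ i, eigA A i = ∑ k, ∑ l, (A k l) ^ 2 := by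
  classical
  have hA := (by simpa using Matrix.isHermitian_conjTranspose_mul_self A : (Aᵀ * A).IsHermitian)
  have h2 : Matrix.trace (Aᵀ * A) = ∑ i, eigA A i := by
    rw [hA.trace_eq_sum_eigenvalues]; rfl
  have h4 : Matrix.trace (Aᵀ * A) = ∑ k, ∑ l, (A k l) ^ 2 := by
    simp only [Matrix.trace, Matrix.diag, Matrix.mul_apply, Matrix.transpose_apply, pow_two]
    exact Finset.sum_comm
  rw [← h2, h4]


lemma card_nonzero_singVals (A : Matrix (Fin m₁) (Fin m₂) ℝ) :
    Fintype.card {i // singVals A i ≠ 0} = A.rank := by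
  classical
  have hA := (by simpa using Matrix.isHermitian_conjTranspose_mul_self A : (Aᵀ * A).IsHermitian)
  have h1 : (Aᵀ * A).rank = A.rank := Matrix.rank_transpose_mul_self A
  have h2 : (Aᴴ * A).rank = Fintype.card {i // hA.eigenvalues i ≠ 0} :=
    hA.rank_eq_card_non_zero_eigs
  have h3 : Fintype.card {i // singVals A i ≠ 0}
      = Fintype.card {i // hA.eigenvalues i ≠ 0} := by
    apply Fintype.card_congr
    apply Equiv.subtypeEquivRight
    intro i
    rw [not_iff_not]
    exact singVals_eq_zero_iff A i
  rw [h3, ← h2]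
  exact h1

lemma frobNorm_nonneg (A : Matrix (Fin m₁) (Fin m₂) ℝ) : 0 ≤ frobNorm A := Real.sqrt_nonneg _

lemma frobNorm_eq_sqrt_sum_sq (A : Matrix (Fin m₁) (Fin m₂) ℝ) :
    frobNorm A = Real.sqrt (∑ i, singVals A i ^ 2) := by
  rw [frobNorm]
  congr 1
  simp only [singVals_sq]
  exact (sum_eigA A).symm

lemma nucNorm_le_sqrt_rank_mul_frobNorm (A : Matrix (Fin m₁) (Fin m₂) ℝ) :
    nucNorm A ≤ Real.sqrt (A.rank : ℝ) * frobNorm A := by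
  classical
  set s : Finset (Fin m₂) := Finset.univ.filter (fun i => singVals A i ≠ 0) with hs
  have hcard : (s.card : ℝ) = (A.rank : ℝ) := by
    rw [← card_nonzero_singVals A]
    norm_cast
    rw [Fintype.card_subtype]
  have h1 : nucNorm A = ∑ i ∈ s, 1 * singVals A i := by
    rw [nucNorm]
    rw [← Finset.sum_filter_add_sum_filter_not Finset.univ (fun i => singVals A i ≠ 0)]
    have : ∑ i ∈ Finset.univ.filter (fun i => ¬ singVals A i ≠ 0), singVals A i = 0 := by
      apply Finset.sum_eq_zero
      intro i hi
      simp only [Finset.mem_filter, not_not] at hi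
      exact hi.2
    rw [this, add_zero]
    simp [hs]
  rw [h1]
  calc ∑ i ∈ s, 1 * singVals A i
      ≤ Real.sqrt (∑ i ∈ s, (1:ℝ) ^ 2) * Real.sqrt (∑ i ∈ s, singVals A i ^ 2) :=
        Real.sum_mul_le_sqrt_mul_sqrt _ _ _
    _ ≤ Real.sqrt (A.rank : ℝ) * frobNorm A := by
        apply mul_le_mul
        · apply Real.sqrt_le_sqrt
          simp only [one_pow, Finset.sum_const, nsmul_eq_mul, mul_one]
          exact le_of_eq hcard
        · rw [frobNorm_eq_sqrt_sum_sq]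
          apply Real.sqrt_le_sqrt
          apply Finset.sum_le_sum_of_subset_of_nonneg (Finset.subset_univ s)
          intro i _ _
          exact sq_nonneg _
        · exact Real.sqrt_nonneg _
        · exact Real.sqrt_nonneg _


noncomputable def rsv0 (A : Matrix (Fin m₁) (Fin m₂) ℝ) : Fin m₂ → Fin m₂ → ℝ :=
  fun i => if singVals A i = 0 then 0 else rsv A i

noncomputable def PU (A : Matrix (Fin m₁) (Fin m₂) ℝ) : Matrix (Fin m₁) (Fin m₁) ℝ :=
  ∑ i, Matrix.vecMulVec (lsv A i) (lsv A i)

noncomputable def PV (A : Matrix (Fin m₁) (Fin m₂) ℝ) : Matrix (Fin m₂) (Fin m₂) ℝ :=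
  ∑ i, Matrix.vecMulVec (rsv0 A i) (rsv0 A i)

lemma mulVec_dot_mulVec {n₁ n₂ n₃ : ℕ} (A : Matrix (Fin n₁) (Fin n₂) ℝ)
    (B : Matrix (Fin n₁) (Fin n₃) ℝ) (x : Fin n₂ → ℝ) (y : Fin n₃ → ℝ) :
    (A *ᵥ x) ⬝ᵥ (B *ᵥ y) = x ⬝ᵥ ((Aᵀ * B) *ᵥ y) := by
  rw [← Matrix.mulVec_mulVec]
  conv_rhs => rw [Matrix.dotProduct_mulVec, Matrix.vecMul_transpose]

lemma vmv_mul_vmv {n₁ n₂ n₃ : ℕ} (u : Fin n₁ → ℝ) (v : Fin n₂ → ℝ) (w : Fin n₂ → ℝ)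
    (z : Fin n₃ → ℝ) :
    Matrix.vecMulVec u v * Matrix.vecMulVec w z = (v ⬝ᵥ w) • Matrix.vecMulVec u z := by
  ext k l
  simp only [Matrix.mul_apply, Matrix.vecMulVec_apply, Matrix.smul_apply, smul_eq_mul,
    dotProduct, Finset.sum_mul]
  exact Finset.sum_congr rfl fun i _ => by ring

lemma rsv0_dot (A : Matrix (Fin m₁) (Fin m₂) ℝ) (i j : Fin m₂) :
    rsv0 A i ⬝ᵥ rsv0 A j = if i = j ∧ singVals A i ≠ 0 then 1 else 0 := by
  unfold rsv0
  rcases eq_or_ne (singVals A i) 0 with h | h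
  · simp [h]
  rcases eq_or_ne (singVals A j) 0 with h' | h'
  · have : ¬ (i = j ∧ singVals A i ≠ 0) := by rintro ⟨rfl, h2⟩; exact h2 h'
    simp [h', this]
  · rw [if_neg h, if_neg h', rsv_orthonormal]
    rcases eq_or_ne i j with rfl | hij
    · simp [h]
    · simp [hij]

lemma rsv0_norm_le (A : Matrix (Fin m₁) (Fin m₂) ℝ) (i : Fin m₂) : rsv0 A i ⬝ᵥ rsv0 A i ≤ 1 := by
  rw [rsv0_dot]; split <;> norm_num

lemma rsv0_orth (A : Matrix (Fin m₁) (Fin m₂) ℝ) :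
    ∀ i j, i ≠ j → rsv0 A i ⬝ᵥ rsv0 A j = 0 := by
  intro i j hij; rw [rsv0_dot]; simp [hij]

lemma PU_transpose (A : Matrix (Fin m₁) (Fin m₂) ℝ) : (PU A)ᵀ = PU A := by
  unfold PU
  rw [Matrix.transpose_sum]
  exact Finset.sum_congr rfl fun i _ => by
    ext k l; simp [Matrix.vecMulVec_apply, mul_comm]

lemma PV_transpose (A : Matrix (Fin m₁) (Fin m₂) ℝ) : (PV A)ᵀ = PV A := by
  unfold PV
  rw [Matrix.transpose_sum]
  exact Finset.sum_congr rfl fun i _ => by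
    ext k l; simp [Matrix.vecMulVec_apply, mul_comm]

lemma PU_idem (A : Matrix (Fin m₁) (Fin m₂) ℝ) : PU A * PU A = PU A := by
  unfold PU
  rw [Finset.sum_mul]
  refine Finset.sum_congr rfl fun i _ => ?_
  rw [Finset.mul_sum]
  have : ∀ j, Matrix.vecMulVec (lsv A i) (lsv A i) * Matrix.vecMulVec (lsv A j) (lsv A j)
      = (lsv A i ⬝ᵥ lsv A j) • Matrix.vecMulVec (lsv A i) (lsv A j) := fun j => vmv_mul_vmv _ _ _ _
  simp only [this, lsv_dot]
  rw [Finset.sum_eq_single i]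
  · rcases eq_or_ne (singVals A i) 0 with h | h
    · simp only [h, lsv_eq_zero A i h, ne_eq, not_true_eq_false, and_false, if_false, zero_smul]
      ext k l; simp [Matrix.vecMulVec_apply]
    · simp [h]
  · intro j _ hj
    simp [Ne.symm hj]
  · intro h; exact absurd (Finset.mem_univ i) h

lemma PV_idem (A : Matrix (Fin m₁) (Fin m₂) ℝ) : PV A * PV A = PV A := by
  unfold PV
  rw [Finset.sum_mul]
  refine Finset.sum_congr rfl fun i _ => ?_
  rw [Finset.mul_sum]
  simp only [vmv_mul_vmv, rsv0_dot]
  rw [Finset.sum_eq_single i]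
  · rcases eq_or_ne (singVals A i) 0 with h | h
    · simp only [h, ne_eq, not_true_eq_false, and_false, if_false, zero_smul, rsv0, if_pos rfl]
      ext k l; simp [Matrix.vecMulVec_apply]
    · simp [h]
  · intro j _ hj
    simp [Ne.symm hj]
  · intro h; exact absurd (Finset.mem_univ i) h

lemma svd_decompM (A : Matrix (Fin m₁) (Fin m₂) ℝ) :
    A = ∑ i, singVals A i • Matrix.vecMulVec (lsv A i) (rsv A i) := by
  ext k l
  rw [svd_decomp A k l]
  rw [Matrix.sum_apply]  -- matrix sum applied
  rfl

lemma PU_mul_self_eq (A : Matrix (Fin m₁) (Fin m₂) ℝ) : PU A * A = A := by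
  nth_rewrite 2 3 [svd_decompM A]
  rw [Matrix.mul_sum]
  refine Finset.sum_congr rfl fun j _ => ?_
  rw [Matrix.mul_smul, PU, Matrix.sum_mul]
  simp only [vmv_mul_vmv, lsv_dot]
  rw [Finset.sum_eq_single j]
  · rcases eq_or_ne (singVals A j) 0 with h | h
    · simp [h, lsv_eq_zero A j h]
    · simp [h]
  · intro i _ hi; simp [hi]
  · intro h; exact absurd (Finset.mem_univ j) h

lemma self_mul_PV_eq (A : Matrix (Fin m₁) (Fin m₂) ℝ) : A * PV A = A := by
  nth_rewrite 1 3 [svd_decompM A]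
  rw [Matrix.sum_mul]
  refine Finset.sum_congr rfl fun j _ => ?_
  rw [Matrix.smul_mul, PV, Matrix.mul_sum]
  simp only [vmv_mul_vmv]
  have hdot : ∀ i, rsv A j ⬝ᵥ rsv0 A i = if j = i ∧ singVals A i ≠ 0 then 1 else 0 := by
    intro i
    unfold rsv0
    rcases eq_or_ne (singVals A i) 0 with h | h
    · simp [h]
    · rw [if_neg h, rsv_orthonormal]
      rcases eq_or_ne j i with rfl | hij
      · simp [h]
      · simp [hij]
  simp only [hdot]
  rw [Finset.sum_eq_single j]
  · rcases eq_or_ne (singVals A j) 0 with h | h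
    · simp [h]
    · simp [h, rsv0]
  · intro i _ hi; simp [Ne.symm hi]
  · intro h; exact absurd (Finset.mem_univ j) h


lemma lsv_def (A : Matrix (Fin m₁) (Fin m₂) ℝ) (i : Fin m₂) :
    lsv A i = (singVals A i)⁻¹ • (A *ᵥ rsv A i) := rfl

lemma rsv_mem_range (A : Matrix (Fin m₁) (Fin m₂) ℝ) (i : Fin m₂) (h : singVals A i ≠ 0) :
    rsv A i = (eigA A i)⁻¹ • (Aᵀ *ᵥ (A *ᵥ rsv A i)) := by
  have hlz : eigA A i ≠ 0 := fun hh => h ((singVals_eq_zero_iff A i).mpr hh)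
  rw [Matrix.mulVec_mulVec, mulVec_rsv, smul_smul, inv_mul_cancel₀ hlz, one_smul]

lemma lsv_cross (A B : Matrix (Fin m₁) (Fin m₂) ℝ) (hAB : Aᵀ * B = 0) (i j : Fin m₂) :
    lsv A i ⬝ᵥ lsv B j = 0 := by
  rw [lsv_def A, lsv_def B, smul_dotProduct, dotProduct_smul,
    mulVec_dot_mulVec, hAB]
  simp

lemma rsv0_cross (A B : Matrix (Fin m₁) (Fin m₂) ℝ) (hABt : A * Bᵀ = 0) (i j : Fin m₂) :
    rsv0 A i ⬝ᵥ rsv0 B j = 0 := by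
  unfold rsv0
  rcases eq_or_ne (singVals A i) 0 with h | h
  · simp [h]
  rcases eq_or_ne (singVals B j) 0 with h' | h'
  · simp [h']
  rw [if_neg h, if_neg h', rsv_mem_range A i h, rsv_mem_range B j h',
    smul_dotProduct, dotProduct_smul, mulVec_dot_mulVec,
    Matrix.transpose_transpose, hABt]
  simp

lemma mulVec_rsv0_cross (A B : Matrix (Fin m₁) (Fin m₂) ℝ) (hABt : A * Bᵀ = 0) (i : Fin m₂) :
    B *ᵥ rsv0 A i = 0 := by
  unfold rsv0
  rcases eq_or_ne (singVals A i) 0 with h | h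
  · simp [h]
  rw [if_neg h, rsv_mem_range A i h, Matrix.mulVec_smul, Matrix.mulVec_mulVec]
  have : B * Aᵀ = 0 := by
    have := congrArg Matrix.transpose hABt
    rwa [Matrix.transpose_mul, Matrix.transpose_transpose, Matrix.transpose_zero] at this
  rw [this]
  simp

lemma mulVec_rsv0_self (A : Matrix (Fin m₁) (Fin m₂) ℝ) (i : Fin m₂) :
    A *ᵥ rsv0 A i = singVals A i • lsv A i := by
  unfold rsv0
  rcases eq_or_ne (singVals A i) 0 with h | h
  · simp [h]
  · rw [if_neg h]; exact mulVec_rsv_eq_smul_lsv A i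

lemma dot_diag_term (A : Matrix (Fin m₁) (Fin m₂) ℝ) (i : Fin m₂) :
    lsv A i ⬝ᵥ (A *ᵥ rsv0 A i) = singVals A i := by
  rw [mulVec_rsv0_self, dotProduct_smul, smul_eq_mul, lsv_dot]
  rcases eq_or_ne (singVals A i) 0 with h | h
  · simp [h]
  · simp [h]

lemma nucNorm_add_of_orth (A B : Matrix (Fin m₁) (Fin m₂) ℝ)
    (hAB : Aᵀ * B = 0) (hABt : A * Bᵀ = 0) :
    nucNorm A + nucNorm B ≤ nucNorm (A + B) := by
  classical
  set u : Fin m₂ ⊕ Fin m₂ → Fin m₁ → ℝ := Sum.elim (lsv A) (lsv B) with hu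
  set v : Fin m₂ ⊕ Fin m₂ → Fin m₂ → ℝ := Sum.elim (rsv0 A) (rsv0 B) with hv
  have hBA : Bᵀ * A = 0 := by
    have := congrArg Matrix.transpose hAB
    rwa [Matrix.transpose_mul, Matrix.transpose_transpose, Matrix.transpose_zero] at this
  have hBAt : B * Aᵀ = 0 := by
    have := congrArg Matrix.transpose hABt
    rwa [Matrix.transpose_mul, Matrix.transpose_transpose, Matrix.transpose_zero] at this
  have key : nucNorm A + nucNorm B = ∑ c, u c ⬝ᵥ ((A + B) *ᵥ v c) := by
    rw [Fintype.sum_sum_type]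
    have hA : ∀ i, u (Sum.inl i) ⬝ᵥ ((A + B) *ᵥ v (Sum.inl i)) = singVals A i := by
      intro i
      simp only [hu, hv, Sum.elim_inl]
      rw [Matrix.add_mulVec, dotProduct_add, mulVec_rsv0_cross A B hABt]
      rw [dot_diag_term]
      simp
    have hB : ∀ i, u (Sum.inr i) ⬝ᵥ ((A + B) *ᵥ v (Sum.inr i)) = singVals B i := by
      intro i
      simp only [hu, hv, Sum.elim_inr]
      rw [Matrix.add_mulVec, dotProduct_add, mulVec_rsv0_cross B A hBAt]
      rw [dot_diag_term]
      simp
    simp only [hA, hB, nucNorm]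
  rw [key]
  apply sum_dot_le_nucNorm (A + B) u v
  · rintro (i | i) (j | j) hij <;> simp only [hu, Sum.elim_inl, Sum.elim_inr]
    · exact lsv_orth A i j (by simpa using hij)
    · exact lsv_cross A B hAB i j
    · rw [dotProduct_comm]; exact lsv_cross A B hAB j i
    · exact lsv_orth B i j (by simpa using hij)
  · rintro (i | i) <;> simp only [hu, Sum.elim_inl, Sum.elim_inr]
    · exact lsv_norm_le A i
    · exact lsv_norm_le B i
  · rintro (i | i) (j | j) hij <;> simp only [hv, Sum.elim_inl, Sum.elim_inr]
    · exact rsv0_orth A i j (by simpa using hij)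
    · exact rsv0_cross A B hABt i j
    · rw [dotProduct_comm]; exact rsv0_cross A B hABt j i
    · exact rsv0_orth B i j (by simpa using hij)
  · rintro (i | i) <;> simp only [hv, Sum.elim_inl, Sum.elim_inr]
    · exact rsv0_norm_le A i
    · exact rsv0_norm_le B i


lemma D1_form (Xt D : Matrix (Fin m₁) (Fin m₂) ℝ) :
    D - (1 - PU Xt) * D * (1 - PV Xt) = PU Xt * D + (1 - PU Xt) * D * PV Xt := by
  have e1 : (1 - PU Xt) * D = D - PU Xt * D := by rw [Matrix.sub_mul, Matrix.one_mul]
  rw [e1, Matrix.mul_sub, Matrix.mul_one]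
  simp only [Matrix.sub_mul]
  abel

lemma PU_eq_U0 (Xt : Matrix (Fin m₁) (Fin m₂) ℝ) :
    PU Xt = (Matrix.of fun k (i : {i // singVals Xt i ≠ 0}) => lsv Xt i.1 k)
      * (Matrix.of fun k (i : {i // singVals Xt i ≠ 0}) => lsv Xt i.1 k)ᵀ := by
  classical
  ext k k'
  rw [Matrix.mul_apply]
  simp only [Matrix.of_apply, Matrix.transpose_apply]
  rw [PU, Matrix.sum_apply]
  simp only [Matrix.vecMulVec_apply]
  rw [← Finset.sum_subtype (Finset.univ.filter (fun i => singVals Xt i ≠ 0))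
    (by simp) (fun i => lsv Xt i k * lsv Xt i k')]
  rw [Finset.sum_filter]
  refine (Finset.sum_congr rfl fun i _ => ?_).symm
  rcases eq_or_ne (singVals Xt i) 0 with h | h
  · simp [h, lsv_eq_zero Xt i h]
  · simp [h]

lemma PV_eq_V0 (Xt : Matrix (Fin m₁) (Fin m₂) ℝ) :
    PV Xt = (Matrix.of fun l (i : {i // singVals Xt i ≠ 0}) => rsv Xt i.1 l)
      * (Matrix.of fun l (i : {i // singVals Xt i ≠ 0}) => rsv Xt i.1 l)ᵀ := by
  classical
  ext l l'
  rw [Matrix.mul_apply]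
  simp only [Matrix.of_apply, Matrix.transpose_apply]
  rw [PV, Matrix.sum_apply]
  simp only [Matrix.vecMulVec_apply]
  rw [← Finset.sum_subtype (Finset.univ.filter (fun i => singVals Xt i ≠ 0))
    (by simp) (fun i => rsv Xt i l * rsv Xt i l')]
  rw [Finset.sum_filter]
  refine (Finset.sum_congr rfl fun i _ => ?_).symm
  unfold rsv0
  rcases eq_or_ne (singVals Xt i) 0 with h | h
  · simp [h]
  · simp [h]

lemma rank_D1_le (Xt D : Matrix (Fin m₁) (Fin m₂) ℝ) :
    (D - (1 - PU Xt) * D * (1 - PV Xt)).rank ≤ 2 * Xt.rank := by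
  classical
  set s := {i // singVals Xt i ≠ 0}
  set U0 : Matrix (Fin m₁) s ℝ := Matrix.of fun k (i : s) => lsv Xt i.1 k with hU0
  set V0 : Matrix (Fin m₂) s ℝ := Matrix.of fun l (i : s) => rsv Xt i.1 l with hV0
  have hD1 : D - (1 - PU Xt) * D * (1 - PV Xt)
      = Matrix.fromCols U0 ((1 - PU Xt) * D * V0)
        * Matrix.fromRows (U0ᵀ * D) V0ᵀ := by
    rw [Matrix.fromCols_mul_fromRows, D1_form]
    congr 1
    · rw [← Matrix.mul_assoc, ← PU_eq_U0]
    · rw [Matrix.mul_assoc ((1 - PU Xt) * D) V0 V0ᵀ, hV0, ← PV_eq_V0, Matrix.mul_assoc]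
  rw [hD1]
  calc (Matrix.fromCols U0 ((1 - PU Xt) * D * V0) * Matrix.fromRows (U0ᵀ * D) V0ᵀ).rank
      ≤ (Matrix.fromCols U0 ((1 - PU Xt) * D * V0)).rank := Matrix.rank_mul_le_left _ _
    _ ≤ Fintype.card (s ⊕ s) := Matrix.rank_le_card_width _
    _ = 2 * Xt.rank := by
        rw [Fintype.card_sum, card_nonzero_singVals Xt]; ring

lemma innF_eq_trace (A B : Matrix (Fin m₁) (Fin m₂) ℝ) : innF A B = Matrix.trace (Aᵀ * B) := by
  simp only [innF, Matrix.trace, Matrix.diag, Matrix.mul_apply, Matrix.transpose_apply]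
  exact Finset.sum_comm

lemma innF_comm (A B : Matrix (Fin m₁) (Fin m₂) ℝ) : innF A B = innF B A := by
  simp only [innF]
  exact Finset.sum_congr rfl fun k _ => Finset.sum_congr rfl fun l _ => mul_comm _ _

lemma innF_add_left (A B C : Matrix (Fin m₁) (Fin m₂) ℝ) :
    innF (A + B) C = innF A C + innF B C := by
  simp only [innF, Matrix.add_apply, add_mul, Finset.sum_add_distrib]

lemma innF_self_nonneg (A : Matrix (Fin m₁) (Fin m₂) ℝ) : 0 ≤ innF A A :=
  Finset.sum_nonneg fun k _ => Finset.sum_nonneg fun l _ => mul_self_nonneg _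

lemma innF_D1_D2 (Xt D : Matrix (Fin m₁) (Fin m₂) ℝ) :
    innF (D - (1 - PU Xt) * D * (1 - PV Xt)) ((1 - PU Xt) * D * (1 - PV Xt)) = 0 := by
  rw [innF_eq_trace, D1_form]
  have hPU0 : PU Xt * (1 - PU Xt) = 0 := by
    rw [Matrix.mul_sub, Matrix.mul_one, PU_idem, sub_self]
  have hPV0 : (1 - PV Xt) * PV Xt = 0 := by
    rw [Matrix.sub_mul, Matrix.one_mul, PV_idem, sub_self]
  rw [Matrix.transpose_add, Matrix.transpose_mul, Matrix.transpose_mul, Matrix.transpose_mul,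
    PU_transpose, PV_transpose, Matrix.transpose_sub, Matrix.transpose_one, PU_transpose]
  rw [Matrix.add_mul, Matrix.trace_add]
  have h1 : Dᵀ * (PU Xt * ((1 - PU Xt) * (D * (1 - PV Xt)))) = 0 := by
    rw [← Matrix.mul_assoc (PU Xt) (1 - PU Xt), hPU0, Matrix.zero_mul, Matrix.mul_zero]
  simp only [Matrix.mul_assoc]
  rw [h1, Matrix.trace_zero, zero_add, Matrix.trace_mul_comm]
  simp only [Matrix.mul_assoc]
  rw [hPV0]
  simp


lemma eig_congr {n : ℕ} {A B : Matrix (Fin n) (Fin n) ℝ} (hA : A.IsHermitian)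
    (hB : B.IsHermitian) (h : A = B) : hA.eigenvalues = hB.eigenvalues := by
  subst h; rfl

lemma singVals_neg (M : Matrix (Fin m₁) (Fin m₂) ℝ) : singVals (-M) = singVals M := by
  funext i
  unfold singVals
  congr 1
  exact congrFun (eig_congr _ _ (by simp)) i

lemma nucNorm_neg (M : Matrix (Fin m₁) (Fin m₂) ℝ) : nucNorm (-M) = nucNorm M := by
  unfold nucNorm; rw [singVals_neg]

lemma frobNorm_eq_innF (M : Matrix (Fin m₁) (Fin m₂) ℝ) :
    frobNorm M = Real.sqrt (innF M M) := by
  rw [frobNorm, innF]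
  congr 1
  exact Finset.sum_congr rfl fun k _ => Finset.sum_congr rfl fun l _ => by rw [pow_two]

lemma frob_sub_le (D D2 : Matrix (Fin m₁) (Fin m₂) ℝ) (h : innF (D - D2) D2 = 0) :
    frobNorm (D - D2) ≤ frobNorm D := by
  rw [frobNorm_eq_innF, frobNorm_eq_innF]
  apply Real.sqrt_le_sqrt
  have hD : D = (D - D2) + D2 := by abel
  have hexp : innF D D = innF (D - D2) (D - D2) + innF (D - D2) D2
      + (innF D2 (D - D2) + innF D2 D2) := by
    conv_lhs => rw [hD]
    rw [innF_add_left]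
    congr 1
    · rw [innF_comm (D - D2) (D - D2 + D2), innF_add_left, innF_comm (D - D2) (D - D2),
        innF_comm D2 (D - D2)]
    · rw [innF_comm D2 (D - D2 + D2), innF_add_left, innF_comm (D - D2) D2, innF_comm D2 D2]
  have h2 : innF D2 (D - D2) = 0 := by rw [innF_comm]; exact h
  rw [hexp, h, h2]
  have := innF_self_nonneg D2
  linarith

attribute [local instance] Matrix.normedAddCommGroup Matrix.normedSpace

lemma lin_eq_innF (L : Matrix (Fin m₁) (Fin m₂) ℝ →L[ℝ] ℝ) (Gf : Matrix (Fin m₁) (Fin m₂) ℝ)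
    (hGf : ∀ k l, Gf k l = L (Matrix.single k l (1 : ℝ)))
    (D : Matrix (Fin m₁) (Fin m₂) ℝ) : L D = innF Gf D := by
  conv_lhs => rw [Matrix.matrix_eq_sum_single D]
  rw [map_sum]
  rw [innF]
  refine Finset.sum_congr rfl fun k _ => ?_
  rw [map_sum]
  refine Finset.sum_congr rfl fun l _ => ?_
  have : Matrix.single k l (D k l) = D k l • Matrix.single k l (1:ℝ) := by
    rw [Matrix.smul_single, smul_eq_mul, mul_one]
  rw [this, _root_.map_smul, smul_eq_mul, hGf k l, mul_comm]

lemma grad_ineq (f : Matrix (Fin m₁) (Fin m₂) ℝ → ℝ) (hconv : ConvexOn ℝ Set.univ f)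
    (X Xt : Matrix (Fin m₁) (Fin m₂) ℝ) (L : Matrix (Fin m₁) (Fin m₂) ℝ →L[ℝ] ℝ)
    (hL : HasFDerivAt f L Xt) : L (X - Xt) ≤ f X - f Xt := by
  set D := X - Xt with hDdef
  set g : ℝ → ℝ := fun t => f (Xt + t • D) with hg
  have hcg : ConvexOn ℝ Set.univ g := by
    have h := hconv.comp_affineMap (AffineMap.lineMap Xt X : ℝ →ᵃ[ℝ] Matrix (Fin m₁) (Fin m₂) ℝ)
    rw [Set.preimage_univ] at h
    suffices e : g = f ∘ ⇑(AffineMap.lineMap Xt X : ℝ →ᵃ[ℝ] Matrix (Fin m₁) (Fin m₂) ℝ) by rw [e]; exact h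
    funext t
    simp only [hg, Function.comp_apply, AffineMap.lineMap_apply, vsub_eq_sub, vadd_eq_add]
    rw [add_comm]
  have hderiv : HasDerivAt g (L D) 0 := by
    have h1 : HasDerivAt (fun t : ℝ => Xt + t • D) D 0 := by
      exact HasDerivAt.const_add Xt (by simpa using (hasDerivAt_id (0:ℝ)).smul_const D)
    have h0 : (fun t : ℝ => Xt + t • D) 0 = Xt := by simp
    have h2 := HasFDerivAt.comp_hasDerivAt (l := f) (f := fun t : ℝ => Xt + t • D)
      (x := 0) (by rw [zero_smul, add_zero]; exact hL) h1
    exact h2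
  have hslope := hcg.le_slope_of_hasDerivAt (Set.mem_univ 0) (Set.mem_univ 1) zero_lt_one hderiv
  rw [slope_def_field] at hslope
  have hg1 : g 1 = f X := by simp [hg, hDdef]
  have hg0 : g 0 = f Xt := by simp [hg]
  rw [hg1, hg0] at hslope
  simpa using hslope



lemma innF_neg_right (A B : Matrix (Fin m₁) (Fin m₂) ℝ) : innF A (-B) = - innF A B := by
  simp [innF, Finset.sum_neg_distrib]

end NucAux

open NucAux in
/-- Lemma 2(ii): for a convex differentiable data-fitting term `f` (in the paper
`f = L_Y`), if `X` has smaller penalized objective than `X̃` and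
`λ ≥ 2‖∇f(X̃)‖_{σ,∞}`, then the nuclear norm of the error is controlled by its Frobenius norm. `Gf` is the gradient matrix of `f` at `X̃`,
i.e. the matrix representing the Fréchet derivative `L` of `f` at `X̃`. -/
theorem nucNorm_le_frobNorm_of_min (m₁ m₂ : ℕ) (f : Matrix (Fin m₁) (Fin m₂) ℝ → ℝ)
    (hconv : ConvexOn ℝ Set.univ f) (hdiff : Differentiable ℝ f)
    (lam : ℝ) (hlam : 0 < lam)
    (X Xt : Matrix (Fin m₁) (Fin m₂) ℝ)
    (L : Matrix (Fin m₁) (Fin m₂) ℝ →L[ℝ] ℝ) (hL : HasFDerivAt f L Xt)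
    (Gf : Matrix (Fin m₁) (Fin m₂) ℝ)
    (hGf : ∀ k l, Gf k l = L (Matrix.single k l (1 : ℝ)))
    (hmin : f X + lam * nucNorm X ≤ f Xt + lam * nucNorm Xt)
    (hlam2 : 2 * opNorm Gf ≤ lam) :
    nucNorm (X - Xt) ≤ 4 * Real.sqrt (2 * (Xt.rank : ℝ)) * frobNorm (X - Xt) := by
  classical
  set D := X - Xt with hD
  set D2 := (1 - NucAux.PU Xt) * D * (1 - NucAux.PV Xt) with hD2
  set D1 := D - D2 with hD1
  have hPUX : (1 - NucAux.PU Xt) * Xt = 0 := by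
    rw [Matrix.sub_mul, Matrix.one_mul, NucAux.PU_mul_self_eq, sub_self]
  have hXPV : Xt * (1 - NucAux.PV Xt) = 0 := by
    rw [Matrix.mul_sub, Matrix.mul_one, NucAux.self_mul_PV_eq, sub_self]
  have hXtD2 : Xtᵀ * D2 = 0 := by
    have h2 : Xtᵀ * (1 - NucAux.PU Xt) = 0 := by
      have := congrArg Matrix.transpose hPUX
      rwa [Matrix.transpose_mul, Matrix.transpose_sub, Matrix.transpose_one,
        NucAux.PU_transpose, Matrix.transpose_zero] at this
    calc Xtᵀ * D2 = (Xtᵀ * (1 - NucAux.PU Xt)) * (D * (1 - NucAux.PV Xt)) := by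
          rw [hD2, Matrix.mul_assoc, Matrix.mul_assoc]
      _ = 0 := by rw [h2, Matrix.zero_mul]
  have hXtD2t : Xt * D2ᵀ = 0 := by
    have hD2t : D2ᵀ = (1 - NucAux.PV Xt) * (Dᵀ * (1 - NucAux.PU Xt)) := by
      rw [hD2]
      simp only [Matrix.transpose_mul, Matrix.transpose_sub, Matrix.transpose_one,
        NucAux.PU_transpose, NucAux.PV_transpose, Matrix.mul_assoc]
    calc Xt * D2ᵀ = (Xt * (1 - NucAux.PV Xt)) * (Dᵀ * (1 - NucAux.PU Xt)) := by
          rw [hD2t, Matrix.mul_assoc]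
      _ = 0 := by rw [hXPV, Matrix.zero_mul]
  have hadd : nucNorm Xt + nucNorm D2 ≤ nucNorm (Xt + D2) :=
    NucAux.nucNorm_add_of_orth Xt D2 hXtD2 hXtD2t
  have hgrad : L D ≤ f X - f Xt := NucAux.grad_ineq f hconv X Xt L hL
  have hLD : L D = NucAux.innF Gf D := NucAux.lin_eq_innF L Gf hGf D
  have hdual : NucAux.innF Gf (-D) ≤ opNorm Gf * nucNorm D := by
    have h := NucAux.innF_le_opNorm_mul_nucNorm Gf (-D)
    rwa [NucAux.nucNorm_neg] at h
  have hstep1 : f Xt - f X ≤ opNorm Gf * nucNorm D := by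
    have hneg : NucAux.innF Gf (-D) = - NucAux.innF Gf D := NucAux.innF_neg_right Gf D
    linarith [hgrad, hLD.symm.le, hLD.le]
  have hXeq : X = Xt + D := by rw [hD]; abel
  have hlow : nucNorm Xt + nucNorm D2 - nucNorm D1 ≤ nucNorm X := by
    have heq : Xt + D2 = X + (-D1) := by rw [hD1, hXeq]; abel
    have h1 : nucNorm (Xt + D2) ≤ nucNorm X + nucNorm D1 := by
      rw [heq]
      calc nucNorm (X + -D1) ≤ nucNorm X + nucNorm (-D1) := NucAux.nucNorm_add_le _ _
        _ = nucNorm X + nucNorm D1 := by rw [NucAux.nucNorm_neg]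
    linarith [hadd]
  have htri : nucNorm D ≤ nucNorm D1 + nucNorm D2 := by
    have heq : D = D1 + D2 := by rw [hD1]; abel
    calc nucNorm D = nucNorm (D1 + D2) := by rw [← heq]
      _ ≤ nucNorm D1 + nucNorm D2 := NucAux.nucNorm_add_le _ _
  have h5 : lam * (nucNorm Xt + nucNorm D2 - nucNorm D1) ≤ lam * nucNorm X :=
    mul_le_mul_of_nonneg_left hlow hlam.le
  have hB : opNorm Gf * nucNorm D ≤ (lam/2) * nucNorm D :=
    mul_le_mul_of_nonneg_right (by linarith [hlam2]) (NucAux.nucNorm_nonneg D)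
  have htri' : (lam/2) * nucNorm D ≤ (lam/2) * (nucNorm D1 + nucNorm D2) :=
    mul_le_mul_of_nonneg_left htri (by linarith)
  have h6 : lam * (nucNorm D2 - nucNorm D1) ≤ (lam/2) * (nucNorm D1 + nucNorm D2) := by
    nlinarith [h5, hmin, hstep1, hB, htri']
  have h7 : nucNorm D2 ≤ 3 * nucNorm D1 := by
    by_contra hcon
    push_neg at hcon
    nlinarith [h6, hlam]
  have h8 : nucNorm D ≤ 4 * nucNorm D1 := by linarith [htri, h7]
  have h9 : nucNorm D1 ≤ Real.sqrt (D1.rank : ℝ) * frobNorm D1 :=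
    NucAux.nucNorm_le_sqrt_rank_mul_frobNorm D1
  have h10 : (D1.rank : ℝ) ≤ 2 * (Xt.rank : ℝ) := by
    have := NucAux.rank_D1_le Xt D
    rw [← hD2, ← hD1] at this
    exact_mod_cast this
  have h11 : Real.sqrt (D1.rank : ℝ) ≤ Real.sqrt (2 * (Xt.rank : ℝ)) := Real.sqrt_le_sqrt h10
  have h12 : frobNorm D1 ≤ frobNorm D := by
    have := NucAux.frob_sub_le D D2 (by rw [hD2]; exact NucAux.innF_D1_D2 Xt D)
    rwa [← hD1] at this
  have h13 : nucNorm D1 ≤ Real.sqrt (2 * (Xt.rank : ℝ)) * frobNorm D :=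
    h9.trans (mul_le_mul h11 h12 (NucAux.frobNorm_nonneg _) (Real.sqrt_nonneg _))
  calc nucNorm D ≤ 4 * nucNorm D1 := h8
    _ ≤ 4 * (Real.sqrt (2 * (Xt.rank : ℝ)) * frobNorm D) := by linarith
    _ = 4 * Real.sqrt (2 * (Xt.rank : ℝ)) * frobNorm D := by ring
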